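/- Let (W,S) be a Coxeter system, X ⊆ S, and let w = s_{i_1}⋯s_{i_k} be a word on S. For 0 ≤ j ≤ k write the element represented by the prefix s_{i_1}⋯s_{i_j} as v_j·w_j with v_j ∈ W_X and w_j of minimal length in W_X·w_j. Let j₁ < ⋯ < j_p be exactly those indices j for which the reflection r_j(w) = s_{i_1}⋯s_{i_{j-1}}s_{i_j}s_{i_{j-1}}⋯s_{i_1} lies in W_X, and set t_n = w_{j_n−1}·s_{i_{j_n}}·w_{j_n−1}⁻¹ for 1 ≤ n ≤ p. Then each t_n lies in the generating set of W_X (i.e. t_n ∈ X as a subset of W), and v_j = t_1⋯t_{n−1} whenever j_{n−1} ≤ j < j_n (with j₀ = 0, j_{p+1} = k+1). -/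

import Mathlib

/-- The standard parabolic subgroup of a Coxeter system generated by the simple reflections
indexed by `X`. -/
def CoxeterSystem.standardParabolic {B W : Type*} [Group W] {M : CoxeterMatrix B}
    (cs : CoxeterSystem M W) (X : Set B) : Subgroup W :=
  Subgroup.closure (cs.simple '' X)

open List

namespace ParabolicPrefixAux

variable {B : Type*} {W : Type*} [Group W] {M : CoxeterMatrix B} (cs : CoxeterSystem M W)

open Classical in
/-- Indicator of a proposition with values in `ZMod 2`. -/
noncomputable def ind (p : Prop) : ZMod 2 := if p then 1 else 0

lemma ind_congr {p q : Prop} (h : p ↔ q) : ind p = ind q := by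
  simp only [ind]
  split_ifs with h1 h2 <;> first | rfl | (exfalso; tauto)

lemma ind_of {p : Prop} (h : p) : ind p = 1 := by
  simp only [ind]; rw [if_pos h]

lemma ind_of_not {p : Prop} (h : ¬ p) : ind p = 0 := by
  simp only [ind]; rw [if_neg h]

lemma zmod2_add_self : ∀ x : ZMod 2, x + x = 0 := by decide

lemma zmod2_eq_of_add_eq_zero {x y : ZMod 2} (h : x + y = 0) : x = y := by
  have h2 := congrArg (· + y) h
  simpa [add_assoc, zmod2_add_self] using h2

lemma conj_conj {a : W} (ha : a * a = 1) (x : W) : a * (a * x * a) * a = x := by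
  calc a * (a * x * a) * a = (a * a) * x * (a * a) := by group
    _ = x := by rw [ha, one_mul, mul_one]

lemma conj_eq_self_iff {a x : W} (ha : a * a = 1) : a * x * a = a ↔ x = a := by
  constructor
  · intro h
    have h2 := congrArg (fun z => a * z * a) h
    rwa [conj_conj ha, ha, one_mul] at h2
  · rintro rfl
    rw [ha, one_mul]

/-- The permutation of `W × ZMod 2` associated to an involution `a`. -/
noncomputable def rperm (a : W) (ha : a * a = 1) : Equiv.Perm (W × ZMod 2) where
  toFun p := (a * p.1 * a, p.2 + ind (p.1 = a))
  invFun p := (a * p.1 * a, p.2 + ind (p.1 = a))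
  left_inv p := by
    obtain ⟨t, c⟩ := p
    show (_ * (_ * t * _) * _, (c + ind (t = a)) + ind (a * t * a = a)) = (t, c)
    rw [conj_conj ha, ind_congr (conj_eq_self_iff ha), add_assoc, zmod2_add_self, add_zero]
  right_inv p := by
    obtain ⟨t, c⟩ := p
    show (_ * (_ * t * _) * _, (c + ind (t = a)) + ind (a * t * a = a)) = (t, c)
    rw [conj_conj ha, ind_congr (conj_eq_self_iff ha), add_assoc, zmod2_add_self, add_zero]

@[simp] lemma rperm_apply (a : W) (ha : a * a = 1) (t : W) (c : ZMod 2) :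
    rperm a ha (t, c) = (a * t * a, c + ind (t = a)) := rfl

lemma sum_range_two_mul_eq_zero (g : ℕ → ZMod 2) (m : ℕ) (hg : ∀ j, g (m + j) = g j) :
    ∑ j ∈ Finset.range (2 * m), g j = 0 := by
  have h : 2 * m = m + m := two_mul m
  rw [h, Finset.range_eq_Ico,
    ← Finset.sum_Ico_consecutive g (Nat.zero_le m) (Nat.le_add_right m m)]
  have h1 : ∑ i ∈ Finset.Ico m (m + m), g i = ∑ i ∈ Finset.Ico 0 m, g i := by
    rw [Finset.sum_Ico_eq_sum_range]
    rw [show m + m - m = m from by omega]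
    simp only [hg]
    rw [Finset.range_eq_Ico]
  rw [h1]
  exact zmod2_add_self _

lemma rperm_mul_pow_apply (a b : W) (ha : a * a = 1) (hb : b * b = 1) (n : ℕ) (t : W)
    (c : ZMod 2) :
    ((rperm a ha * rperm b hb) ^ n) (t, c) =
      ((a * b) ^ n * t * ((a * b) ^ n)⁻¹,
        c + ∑ j ∈ Finset.range (2 * n), ind (t = b * (a * b) ^ j)) := by
  have hainv : a⁻¹ = a := inv_eq_of_mul_eq_one_right ha
  have hbinv : b⁻¹ = b := inv_eq_of_mul_eq_one_right hb
  have hF : ∀ (t : W) (c : ZMod 2), (rperm a ha * rperm b hb) (t, c) =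
      ((a * b) * t * (a * b)⁻¹, c + (ind (t = b * (a * b) ^ 0) + ind (t = b * (a * b) ^ 1))) := by
    intro t c
    rw [Equiv.Perm.mul_apply, rperm_apply, rperm_apply, Prod.mk.injEq]
    constructor
    · rw [mul_inv_rev, hainv, hbinv]; group
    · have e0 : ind (t = b) = ind (t = b * (a * b) ^ 0) :=
        ind_congr (by rw [pow_zero, mul_one])
      have e1 : ind (b * t * b = a) = ind (t = b * (a * b) ^ 1) := by
        apply ind_congr
        constructor
        · intro h
          have h2 := congrArg (fun z => b * z * b) h
          rw [conj_conj hb] at h2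
          rw [h2, pow_one, mul_assoc]
        · intro h
          rw [h, pow_one]
          calc b * (b * (a * b)) * b = (b * b) * a * (b * b) := by group
            _ = a := by rw [hb, one_mul, mul_one]
      rw [e0, e1, add_assoc]
  induction n generalizing t c with
  | zero => simp
  | succ n ih =>
    rw [pow_succ, Equiv.Perm.mul_apply, hF, ih]
    rw [Prod.mk.injEq]
    constructor
    · rw [pow_succ, mul_inv_rev]; group
    · have key2 : ∀ j : ℕ, ((a * b) * t * (a * b)⁻¹ = b * (a * b) ^ j) ↔
          (t = b * (a * b) ^ (j + 2)) := by
        intro j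
        have hq : (a * b)⁻¹ * b = b * (a * b) := by
          rw [mul_inv_rev, hainv, hbinv]; group
        have hexp : (a * b)⁻¹ * (b * (a * b) ^ j) * (a * b) = b * (a * b) ^ (j + 2) := by
          calc (a * b)⁻¹ * (b * (a * b) ^ j) * (a * b)
              = ((a * b)⁻¹ * b) * ((a * b) ^ j * (a * b)) := by group
            _ = (b * (a * b)) * ((a * b) ^ j * (a * b)) := by rw [hq]
            _ = b * ((a * b) * ((a * b) ^ j * (a * b))) := by rw [mul_assoc]
            _ = b * ((a * b) * (a * b) ^ (j + 1)) := by rw [← pow_succ]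
            _ = b * (a * b) ^ (j + 2) := by rw [← pow_succ']
        constructor
        · intro h
          have h2 := congrArg (fun z => (a * b)⁻¹ * z * (a * b)) h
          rw [hexp] at h2
          rw [← h2]; group
        · intro h
          rw [h, ← hexp]; group
      have hsum : ∑ j ∈ Finset.range (2 * (n + 1)), ind (t = b * (a * b) ^ j)
          = (∑ j ∈ Finset.range (2 * n), ind (t = b * (a * b) ^ (j + 2))
              + ind (t = b * (a * b) ^ 1)) + ind (t = b * (a * b) ^ 0) := by
        rw [show 2 * (n + 1) = (2 * n + 1) + 1 by ring, Finset.sum_range_succ',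
          Finset.sum_range_succ']
      have hsummand : ∀ j ∈ Finset.range (2 * n),
          ind ((a * b) * t * (a * b)⁻¹ = b * (a * b) ^ j) = ind (t = b * (a * b) ^ (j + 2)) :=
        fun j _ => ind_congr (key2 j)
      rw [Finset.sum_congr rfl hsummand, hsum]
      abel

lemma isLiftable :
    M.IsLiftable (fun i => rperm (cs.simple i) (cs.simple_mul_simple_self i)) := by
  intro i j
  apply Equiv.ext
  rintro ⟨t, c⟩
  dsimp only
  rw [rperm_mul_pow_apply, cs.simple_mul_simple_pow i j]
  have hsum : ∑ jj ∈ Finset.range (2 * M.M i j),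
      ind (t = cs.simple j * (cs.simple i * cs.simple j) ^ jj) = 0 := by
    apply sum_range_two_mul_eq_zero
    intro jj
    apply ind_congr
    rw [pow_add, cs.simple_mul_simple_pow i j, one_mul]
  rw [hsum]
  simp

/-- The reflection representation of `W` on `W × ZMod 2`. -/
noncomputable def phi : W →* Equiv.Perm (W × ZMod 2) :=
  cs.lift ⟨fun i => rperm (cs.simple i) (cs.simple_mul_simple_self i), isLiftable cs⟩

/-- The reflection cocycle. -/
noncomputable def eta (u t : W) : ZMod 2 := ((phi cs u) (t, 0)).2

lemma phi_simple (i : B) :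
    phi cs (cs.simple i) = rperm (cs.simple i) (cs.simple_mul_simple_self i) :=
  cs.lift_apply_simple _ i

lemma phi_apply (u t : W) (c : ZMod 2) : phi cs u (t, c) = (u * t * u⁻¹, c + eta cs u t) := by
  have main : ∀ u : W, ∀ (t : W) (c : ZMod 2),
      phi cs u (t, c) = (u * t * u⁻¹, c + ((phi cs u) (t, 0)).2) := by
    intro u
    induction u using cs.simple_induction_left with
    | one => intro t c; simp
    | mul_simple_left u i ih =>
      intro t c
      rw [map_mul, Equiv.Perm.mul_apply, ih t c, phi_simple, rperm_apply]
      rw [Equiv.Perm.mul_apply, ih t 0, rperm_apply]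
      rw [Prod.mk.injEq]
      constructor
      · rw [mul_inv_rev, cs.inv_simple]; group
      · rw [zero_add, add_assoc]
  exact main u t c

lemma eta_one (t : W) : eta cs 1 t = 0 := by
  simp [eta]

lemma eta_mul (u v t : W) : eta cs (u * v) t = eta cs v t + eta cs u (v * t * v⁻¹) := by
  show ((phi cs (u * v)) (t, 0)).2 = _
  rw [map_mul, Equiv.Perm.mul_apply, phi_apply, phi_apply, zero_add]

lemma eta_inv (u t : W) : eta cs u⁻¹ t = eta cs u (u⁻¹ * t * u) := by
  have h := eta_mul cs u u⁻¹ t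
  rw [show u * u⁻¹ = 1 from by group, eta_one, inv_inv] at h
  exact zmod2_eq_of_add_eq_zero h.symm

lemma eta_simple (i : B) (t : W) : eta cs (cs.simple i) t = ind (t = cs.simple i) := by
  show ((phi cs (cs.simple i)) (t, 0)).2 = _
  rw [phi_simple, rperm_apply]
  exact zero_add _

lemma eta_refl_self {t : W} (ht : cs.IsReflection t) : eta cs t t = 1 := by
  obtain ⟨u, i, rfl⟩ := ht
  rw [mul_assoc]
  have e1 := eta_mul cs u (cs.simple i * u⁻¹) (u * (cs.simple i * u⁻¹))
  have e2 := eta_mul cs (cs.simple i) u⁻¹ (u * (cs.simple i * u⁻¹))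
  have e5 := eta_inv cs u (u * (cs.simple i * u⁻¹))
  have h3 : u⁻¹ * (u * (cs.simple i * u⁻¹)) * u⁻¹⁻¹ = cs.simple i := by group
  have h4 : (cs.simple i * u⁻¹) * (u * (cs.simple i * u⁻¹)) * (cs.simple i * u⁻¹)⁻¹
      = cs.simple i := by group
  have h6 : u⁻¹ * (u * (cs.simple i * u⁻¹)) * u = cs.simple i := by group
  rw [e1, e2, e5, h3, h4, h6, eta_simple]
  rw [ind_of (rfl : cs.simple i = cs.simple i)]
  have : ∀ e : ZMod 2, e + 1 + e = 1 := by decide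
  exact this _

lemma mem_ris_of_eta_ne_zero {ω : List B} {t : W}
    (h : eta cs (cs.wordProd ω) t ≠ 0) : t ∈ cs.rightInvSeq ω := by
  induction ω with
  | nil =>
    rw [cs.wordProd_nil, eta_one] at h
    exact absurd rfl h
  | cons i ω ih =>
    rw [cs.wordProd_cons, eta_mul] at h
    have hd : cs.rightInvSeq (i :: ω)
        = (cs.wordProd ω)⁻¹ * cs.simple i * cs.wordProd ω :: cs.rightInvSeq ω := rfl
    rw [hd]
    by_cases hc : (cs.wordProd ω) * t * (cs.wordProd ω)⁻¹ = cs.simple i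
    · refine List.mem_cons.mpr (Or.inl ?_)
      have h2 := congrArg (fun z => (cs.wordProd ω)⁻¹ * z * cs.wordProd ω) hc
      rw [show (cs.wordProd ω)⁻¹ * (cs.wordProd ω * t * (cs.wordProd ω)⁻¹) * cs.wordProd ω = t
        from by group] at h2
      rw [h2]
    · rw [eta_simple, ind_of_not hc, add_zero] at h
      exact List.mem_cons.mpr (Or.inr (ih h))

lemma length_lt_of_eta_ne_zero {t w : W} (ht : cs.IsReflection t)
    (h : eta cs w⁻¹ t ≠ 0) : cs.length (t * w) < cs.length w := by
  obtain ⟨ρ, hred, rfl⟩ := cs.exists_reduced_word' w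
  have h3 : t ∈ cs.rightInvSeq ρ.reverse :=
    mem_ris_of_eta_ne_zero cs (by rwa [cs.wordProd_reverse])
  obtain ⟨j, hj, hjt⟩ := List.mem_iff_getElem.mp h3
  have hj' : j < ρ.reverse.length := by rw [← cs.length_rightInvSeq ρ.reverse]; exact hj
  have h4 := cs.wordProd_mul_getD_rightInvSeq ρ.reverse j
  rw [List.getD_eq_getElem _ 1 hj, hjt] at h4
  have h5 : t * cs.wordProd ρ = (cs.wordProd (ρ.reverse.eraseIdx j))⁻¹ := by
    rw [← h4, cs.wordProd_reverse, mul_inv_rev, inv_inv, ht.inv]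
  have h6 : cs.length (t * cs.wordProd ρ) ≤ (ρ.reverse.eraseIdx j).length := by
    rw [h5, ← cs.wordProd_reverse]
    calc cs.length (cs.wordProd (ρ.reverse.eraseIdx j).reverse)
        ≤ (ρ.reverse.eraseIdx j).reverse.length := cs.length_wordProd_le _
      _ = (ρ.reverse.eraseIdx j).length := List.length_reverse
  have h7 : (ρ.reverse.eraseIdx j).length + 1 = ρ.length := by
    have := List.length_eraseIdx_add_one hj'
    rwa [List.length_reverse] at this
  have h8 : cs.length (cs.wordProd ρ) = ρ.length := hred
  omega

/-- Strong exchange property. -/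
lemma strong_exchange {ω : List B} {t : W} (ht : cs.IsReflection t)
    (hl : cs.length (t * cs.wordProd ω) < cs.length (cs.wordProd ω)) :
    ∃ ω', ω' <+ ω ∧ ω'.length + 1 = ω.length ∧ cs.wordProd ω' = t * cs.wordProd ω := by
  have hv : eta cs (t * cs.wordProd ω)⁻¹ t = 0 := by
    by_contra h
    have h2 := length_lt_of_eta_ne_zero cs ht h
    rw [← mul_assoc, ht.mul_self, one_mul] at h2
    omega
  have hw : eta cs (cs.wordProd ω)⁻¹ t ≠ 0 := by
    have heq : (cs.wordProd ω)⁻¹ = (t * cs.wordProd ω)⁻¹ * t := by group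
    rw [heq, eta_mul, show t * t * t⁻¹ = t from by group, eta_refl_self cs ht, hv, add_zero]
    exact one_ne_zero
  have h3 : t ∈ cs.rightInvSeq ω.reverse :=
    mem_ris_of_eta_ne_zero cs (by rwa [cs.wordProd_reverse])
  obtain ⟨j, hj, hjt⟩ := List.mem_iff_getElem.mp h3
  have hj' : j < ω.reverse.length := by rw [← cs.length_rightInvSeq ω.reverse]; exact hj
  have h4 := cs.wordProd_mul_getD_rightInvSeq ω.reverse j
  rw [List.getD_eq_getElem _ 1 hj, hjt] at h4
  refine ⟨(ω.reverse.eraseIdx j).reverse, ?_, ?_, ?_⟩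
  · have h5 : ω.reverse.eraseIdx j <+ ω.reverse := List.eraseIdx_sublist _ _
    have h6 := h5.reverse
    rwa [List.reverse_reverse] at h6
  · rw [List.length_reverse]
    have := List.length_eraseIdx_add_one hj'
    rwa [List.length_reverse] at this
  · rw [cs.wordProd_reverse, ← h4, cs.wordProd_reverse, mul_inv_rev, inv_inv, ht.inv]

section Parabolic

variable (X : Set B)

lemma exists_word_of_mem {u : W} (hu : u ∈ cs.standardParabolic X) :
    ∃ ω : List B, (∀ b ∈ ω, b ∈ X) ∧ cs.wordProd ω = u := by
  induction hu using Subgroup.closure_induction with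
  | mem x hx =>
    obtain ⟨b, hbX, rfl⟩ := hx
    exact ⟨[b], by simpa using hbX, cs.wordProd_singleton b⟩
  | one => exact ⟨[], by simp, cs.wordProd_nil⟩
  | mul x y hx hy ihx ihy =>
    obtain ⟨ω₁, h1, h2⟩ := ihx
    obtain ⟨ω₂, h3, h4⟩ := ihy
    refine ⟨ω₁ ++ ω₂, ?_, by rw [cs.wordProd_append, h2, h4]⟩
    intro b hb
    rcases List.mem_append.mp hb with h | h
    exacts [h1 b h, h3 b h]
  | inv x hx ihx =>
    obtain ⟨ω, h1, h2⟩ := ihx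
    refine ⟨ω.reverse, fun b hb => h1 b (List.mem_reverse.mp hb), ?_⟩
    rw [cs.wordProd_reverse, h2]

lemma exists_reduced_sublist (n : ℕ) : ∀ ω : List B, ω.length ≤ n →
    ∃ ω' : List B, ω' <+ ω ∧ cs.IsReduced ω' ∧ cs.wordProd ω' = cs.wordProd ω := by
  induction n with
  | zero =>
    intro ω hω
    have h0 : ω = [] := List.length_eq_zero_iff.mp (Nat.le_zero.mp hω)
    subst h0
    exact ⟨[], List.Sublist.refl _, by simp [CoxeterSystem.IsReduced], rfl⟩
  | succ n ih =>
    intro ω hω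
    by_cases hred : cs.IsReduced ω
    · exact ⟨ω, List.Sublist.refl _, hred, rfl⟩
    · have hne : ω ≠ [] := by
        rintro rfl
        exact hred (by simp [CoxeterSystem.IsReduced])
      have hlen1 : 1 ≤ ω.length := List.length_pos_iff.mpr hne
      have hex : ∃ j, ¬ cs.IsReduced (ω.take (j + 1)) := by
        refine ⟨ω.length - 1, ?_⟩
        rwa [show ω.length - 1 + 1 = ω.length from by omega, List.take_length]
      classical
      set j := Nat.find hex with hjdef
      have hj : ¬ cs.IsReduced (ω.take (j + 1)) := Nat.find_spec hex
      have hjred : cs.IsReduced (ω.take j) := by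
        rcases Nat.eq_zero_or_pos j with h0 | h0
        · rw [h0, List.take_zero]
          simp [CoxeterSystem.IsReduced]
        · have h1 := Nat.find_min hex (show j - 1 < j from by omega)
          rw [not_not] at h1
          rwa [show j - 1 + 1 = j from by omega] at h1
      have hjlt : j < ω.length := by
        by_contra hc
        push_neg at hc
        rw [List.take_of_length_le hc] at hjred
        exact hred hjred
      have htake : ω.take (j + 1) = ω.take j ++ [ω[j]'hjlt] := by
        rw [List.take_succ, List.getElem?_eq_getElem hjlt, Option.toList_some]
      have hlentake : (ω.take j).length = j := by
        rw [List.length_take]; omega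
      have hu : cs.length (cs.wordProd (ω.take j)) = j := by
        have h2 : cs.length (cs.wordProd (ω.take j)) = (ω.take j).length := hjred
        rwa [hlentake] at h2
      have hprod : cs.wordProd (ω.take (j + 1))
          = cs.wordProd (ω.take j) * cs.simple (ω[j]'hjlt) := by
        rw [htake, cs.wordProd_append, cs.wordProd_singleton]
      rcases cs.length_mul_simple (cs.wordProd (ω.take j)) (ω[j]'hjlt) with hup | hdown
      · exfalso
        apply hj
        show cs.length (cs.wordProd (ω.take (j + 1))) = (ω.take (j + 1)).length
        rw [hprod, hup, hu, List.length_take]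
        omega
      · set u := cs.wordProd (ω.take j) with hudef
        set t := u * cs.simple (ω[j]'hjlt) * u⁻¹ with htdef
        have hrefl : cs.IsReflection t := ⟨u, _, rfl⟩
        have hlt : cs.length (t * u) < cs.length u := by
          rw [show t * u = u * cs.simple (ω[j]'hjlt) from by rw [htdef]; group]
          omega
        obtain ⟨σ, hσ1, hσ2, hσ3⟩ := strong_exchange cs hrefl hlt
        have hω_split : cs.wordProd ω = cs.wordProd (σ ++ ω.drop (j + 1)) := by
          rw [cs.wordProd_append, hσ3,
            show t * u = cs.wordProd (ω.take (j + 1)) from by rw [hprod, htdef]; group,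
            ← cs.wordProd_append, List.take_append_drop]
        have hsub : σ ++ ω.drop (j + 1) <+ ω := by
          have h1 : σ <+ ω.take (j + 1) := by
            refine hσ1.trans ?_
            rw [htake]
            exact List.sublist_append_left _ _
          have h2 := List.Sublist.append h1 (List.Sublist.refl (ω.drop (j + 1)))
          rwa [List.take_append_drop] at h2
        have hlen3 : (σ ++ ω.drop (j + 1)).length ≤ n := by
          rw [List.length_append, List.length_drop]
          rw [hlentake] at hσ2
          omega
        obtain ⟨ω', hA, hB, hC⟩ := ih (σ ++ ω.drop (j + 1)) hlen3
        exact ⟨ω', hA.trans hsub, hB, by rw [hC, ← hω_split]⟩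

lemma exists_reduced_word_on {u : W} (hu : u ∈ cs.standardParabolic X) :
    ∃ ω : List B, (∀ b ∈ ω, b ∈ X) ∧ cs.IsReduced ω ∧ cs.wordProd ω = u := by
  obtain ⟨ω, hX, hprod⟩ := exists_word_of_mem cs X hu
  obtain ⟨ω', h1, h2, h3⟩ := exists_reduced_sublist cs ω.length ω le_rfl
  exact ⟨ω', fun b hb => hX b (h1.subset hb), h2, by rw [h3, hprod]⟩

lemma exists_left_descent_in {u : W} (hu : u ∈ cs.standardParabolic X) (hne : u ≠ 1) :
    ∃ x ∈ X, cs.length (cs.simple x * u) + 1 = cs.length u := by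
  obtain ⟨ω, hX, hred, hprod⟩ := exists_reduced_word_on cs X hu
  cases ω with
  | nil =>
    exfalso
    apply hne
    rw [← hprod, cs.wordProd_nil]
  | cons x ω' =>
    refine ⟨x, hX x (List.mem_cons_self), ?_⟩
    have h1 : cs.simple x * u = cs.wordProd ω' := by
      rw [← hprod, cs.wordProd_cons, ← mul_assoc, cs.simple_mul_simple_self, one_mul]
    have h2 : cs.length (cs.simple x * u) ≤ ω'.length := h1 ▸ cs.length_wordProd_le ω'
    have h3 : cs.length u = ω'.length + 1 := by
      rw [← hprod]
      exact hred
    rcases cs.length_simple_mul u x with h | h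
    · omega
    · exact h

lemma mem_image_of_mem_of_length_one {u : W} (hu : u ∈ cs.standardParabolic X)
    (hlen : cs.length u = 1) : u ∈ cs.simple '' X := by
  obtain ⟨ω, hX, hred, hprod⟩ := exists_reduced_word_on cs X hu
  have h1 : ω.length = 1 := by
    have h2 : cs.length (cs.wordProd ω) = ω.length := hred
    rw [hprod, hlen] at h2
    omega
  obtain ⟨x, rfl⟩ := List.length_eq_one_iff.mp h1
  exact ⟨x, hX x (List.mem_cons_self), by rw [← hprod, cs.wordProd_singleton]⟩

lemma generator_of_conj_mem (d : W) (b : B)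
    (hadd : ∀ x ∈ cs.standardParabolic X, cs.length (x * d) = cs.length x + cs.length d)
    (ht : d * cs.simple b * d⁻¹ ∈ cs.standardParabolic X) :
    d * cs.simple b * d⁻¹ ∈ cs.simple '' X := by
  have h1 : (d * cs.simple b * d⁻¹) * d = d * cs.simple b := by group
  have h2 := hadd _ ht
  rw [h1] at h2
  rcases cs.length_mul_simple d b with h3 | h3
  · apply mem_image_of_mem_of_length_one cs X ht
    rw [h3] at h2
    omega
  · exfalso
    omega

lemma eq_one_of_conj_not_mem (d d₂ u : W) (b : B)
    (hd : ∀ x ∈ cs.standardParabolic X, cs.length (x * d) = cs.length x + cs.length d)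
    (hd₂ : ∀ x ∈ cs.standardParabolic X, cs.length (x * d₂) = cs.length x + cs.length d₂)
    (hu : u ∈ cs.standardParabolic X)
    (heq : u * d₂ = d * cs.simple b)
    (ht : d * cs.simple b * d⁻¹ ∉ cs.standardParabolic X) : u = 1 := by
  by_contra hne
  obtain ⟨x, hxX, hx⟩ := exists_left_descent_in cs X hu hne
  have hsx : cs.simple x ∈ cs.standardParabolic X := Subgroup.subset_closure ⟨x, hxX, rfl⟩
  have hsxu : cs.simple x * u ∈ cs.standardParabolic X := mul_mem hsx hu
  have hA : cs.length (d * cs.simple b) = cs.length u + cs.length d₂ := by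
    rw [← heq]; exact hd₂ u hu
  have hB : cs.length (cs.simple x * (d * cs.simple b)) + 1 = cs.length (d * cs.simple b) := by
    rw [← heq, ← mul_assoc, hd₂ _ hsxu, hd₂ u hu]
    omega
  have hC : cs.length (cs.simple x * d) = 1 + cs.length d := by
    rw [hd _ hsx, cs.length_simple]
  rcases cs.length_mul_simple d b with h3 | h3
  · obtain ⟨ρ, hρred, hρ⟩ := cs.exists_reduced_word' d
    have hρlen : ρ.length = cs.length d := by
      have h4 : cs.length (cs.wordProd ρ) = ρ.length := hρred
      rw [← hρ] at h4
      omega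
    have hprod : cs.wordProd (ρ ++ [b]) = d * cs.simple b := by
      rw [cs.wordProd_append, cs.wordProd_singleton, ← hρ]
    have hlt : cs.length (cs.simple x * cs.wordProd (ρ ++ [b]))
        < cs.length (cs.wordProd (ρ ++ [b])) := by
      rw [hprod]; omega
    obtain ⟨σ, hσ1, hσ2, hσ3⟩ := strong_exchange cs (cs.isReflection_simple x) hlt
    rw [hprod] at hσ3
    obtain ⟨σ₁, σ₂, rfl, hs1, hs2⟩ := List.sublist_append_iff.mp hσ1
    rcases σ₂ with _ | ⟨y, σ₂'⟩
    · have hlen : σ₁.length = ρ.length := by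
        simp only [List.length_append, List.length_nil, List.length_cons] at hσ2
        omega
      have hEq : σ₁ = ρ := hs1.eq_of_length hlen
      subst hEq
      apply ht
      have h5 : cs.simple x = d * cs.simple b * d⁻¹ := by
        rw [List.append_nil, ← hρ] at hσ3
        have h6 : cs.simple x * (d * cs.simple b) = d := hσ3.symm
        calc cs.simple x = (cs.simple x * (d * cs.simple b)) * (d * cs.simple b)⁻¹ := by group
          _ = d * (d * cs.simple b)⁻¹ := by rw [h6]
          _ = d * cs.simple b * d⁻¹ := by rw [mul_inv_rev, cs.inv_simple]; group
      rw [← h5]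
      exact hsx
    · have hy : y = b := by
        have h7 := hs2.subset (List.mem_cons_self)
        simpa using h7
      have hσ₂' : σ₂' = [] := by
        have h8 : (y :: σ₂').length ≤ 1 := by simpa using hs2.length_le
        simp only [List.length_cons] at h8
        exact List.length_eq_zero_iff.mp (by omega)
      subst hσ₂'
      rw [cs.wordProd_append, cs.wordProd_singleton, hy] at hσ3
      have h5 : cs.wordProd σ₁ = cs.simple x * d := by
        calc cs.wordProd σ₁ = cs.wordProd σ₁ * cs.simple b * cs.simple b :=
              (cs.simple_mul_simple_cancel_right b).symm
          _ = cs.simple x * (d * cs.simple b) * cs.simple b := by rw [hσ3]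
          _ = cs.simple x * d * (cs.simple b * cs.simple b) := by group
          _ = cs.simple x * d := by rw [cs.simple_mul_simple_self, mul_one]
      have h6 : cs.length (cs.simple x * d) ≤ σ₁.length := h5 ▸ cs.length_wordProd_le σ₁
      have h7 : σ₁.length + 1 = ρ.length := by
        simp only [List.length_append, List.length_cons, List.length_nil] at hσ2
        omega
      omega
  · have h8 : (cs.simple x * (d * cs.simple b)) * cs.simple b = cs.simple x * d := by
      rw [show cs.simple x * (d * cs.simple b) = cs.simple x * d * cs.simple b from
        (mul_assoc _ _ _).symm]
      exact cs.simple_mul_simple_cancel_right b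
    have h9 : cs.length (cs.simple x * d)
        ≤ cs.length (cs.simple x * (d * cs.simple b)) + 1 := by
      rw [← h8]
      have h10 := cs.length_mul_le (cs.simple x * (d * cs.simple b)) (cs.simple b)
      rwa [cs.length_simple] at h10
    omega

lemma filter_lt_range (P : ℕ → Bool) {j k : ℕ} (h : j ≤ k) :
    ((List.range k).filter P).filter (fun m => decide (m < j)) = (List.range j).filter P := by
  rw [List.filter_filter]
  rw [show k = j + (k - j) from by omega, List.range_add, List.filter_append]
  have h1 : List.filter (fun a => decide (a < j) && P a) (List.range j)
      = List.filter P (List.range j) := by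
    apply List.filter_congr
    intro m hm
    have hmj : m < j := List.mem_range.mp hm
    simp [hmj]
  have h2 : List.filter (fun a => decide (a < j) && P a)
      (List.map (fun x => j + x) (List.range (k - j))) = [] := by
    rw [List.filter_eq_nil_iff]
    intro a ha
    obtain ⟨x, hx, rfl⟩ := List.mem_map.mp ha
    simp [show ¬ (j + x < j) from by omega]
  rw [h1, h2, List.append_nil]

end Parabolic

end ParabolicPrefixAux

/-- Let `w` be a word on `S`, and for each `0 ≤ j ≤ k` write the element of the prefix of
length `j` as `v_j·w_j` with `v_j ∈ W_X` and `w_j` `(X,∅)`-reduced.  Let `j₁ < ⋯ < j_p` be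
exactly the positions whose reflection `r_j(w)` lies in `W_X`, and set
`t_n = w_{j_n−1}·s_{i_{j_n}}·w_{j_n−1}⁻¹` (positions are `0`-based here, so the reflection at
position `m` uses the prefix of length `m`).  Then each `t_n` is a generator lying in `X`, and
`v_j` is the product of the `t_n` for the positions `j_n < j`. -/
theorem parabolic_part_of_prefixes {B W : Type*} [Inhabited B] [Group W] {M : CoxeterMatrix B}
    (cs : CoxeterSystem M W) (X : Set B)
    [∀ a : W, Decidable (a ∈ cs.standardParabolic X)]
    (w : List B) (v wr : ℕ → W)
    (hdecomp : ∀ j ≤ w.length, cs.wordProd (w.take j) = v j * wr j)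
    (hv : ∀ j ≤ w.length, v j ∈ cs.standardParabolic X)
    (hwr : ∀ j ≤ w.length, ∀ x ∈ cs.standardParabolic X,
      cs.length (x * wr j) = cs.length x + cs.length (wr j)) :
    (∀ m ∈ (List.range w.length).filter
        (fun m => decide ((cs.leftInvSeq w).getD m 1 ∈ cs.standardParabolic X)),
      wr m * cs.simple (w.getD m default) * (wr m)⁻¹ ∈ cs.simple '' X) ∧
    (∀ j ≤ w.length, v j =
      ((((List.range w.length).filter
          (fun m => decide ((cs.leftInvSeq w).getD m 1 ∈ cs.standardParabolic X))).filter
            (fun m => decide (m < j))).map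
        (fun m => wr m * cs.simple (w.getD m default) * (wr m)⁻¹)).prod) := by
  open ParabolicPrefixAux in
  have key : ∀ j, (hj : j < w.length) →
      (((cs.leftInvSeq w).getD j 1 ∈ cs.standardParabolic X →
        (wr j * cs.simple (w.getD j default) * (wr j)⁻¹ ∈ cs.simple '' X ∧
          v (j + 1) = v j * (wr j * cs.simple (w.getD j default) * (wr j)⁻¹))) ∧
      ((cs.leftInvSeq w).getD j 1 ∉ cs.standardParabolic X → v (j + 1) = v j)) := by
    intro j hj
    have hj1 : j ≤ w.length := le_of_lt hj
    have hj2 : j + 1 ≤ w.length := hj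
    have hb : w[j]'hj = w.getD j default := (List.getD_eq_getElem w default hj).symm
    have htake : w.take (j + 1) = w.take j ++ [w.getD j default] := by
      rw [List.take_succ, List.getElem?_eq_getElem hj, Option.toList_some, hb]
    have hdj := hdecomp j hj1
    have hdj1 := hdecomp (j + 1) hj2
    have hprod : cs.wordProd (w.take (j + 1))
        = cs.wordProd (w.take j) * cs.simple (w.getD j default) := by
      rw [htake, cs.wordProd_append, cs.wordProd_singleton]
    set t := wr j * cs.simple (w.getD j default) * (wr j)⁻¹ with htdef
    have hlis : (cs.leftInvSeq w).getD j 1 = v j * t * (v j)⁻¹ := by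
      rw [cs.getD_leftInvSeq, List.getElem?_eq_getElem hj]
      simp only [Option.map_some, Option.getD_some]
      rw [hb, hdj, htdef]
      group
    have hmem_iff : ((cs.leftInvSeq w).getD j 1 ∈ cs.standardParabolic X)
        ↔ t ∈ cs.standardParabolic X := by
      rw [hlis]
      constructor
      · intro h
        have h2 := mul_mem (mul_mem (inv_mem (hv j hj1)) h) (hv j hj1)
        rwa [show (v j)⁻¹ * (v j * t * (v j)⁻¹) * v j = t from by group] at h2
      · intro h
        exact mul_mem (mul_mem (hv j hj1) h) (inv_mem (hv j hj1))
    have hueq : ((v j)⁻¹ * v (j + 1)) * wr (j + 1) = wr j * cs.simple (w.getD j default) := by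
      have h1 := hprod
      rw [hdj1, hdj] at h1
      calc ((v j)⁻¹ * v (j + 1)) * wr (j + 1) = (v j)⁻¹ * (v (j + 1) * wr (j + 1)) := by group
        _ = (v j)⁻¹ * (v j * wr j * cs.simple (w.getD j default)) := by rw [← h1]
        _ = wr j * cs.simple (w.getD j default) := by group
    constructor
    · intro hr
      have ht : t ∈ cs.standardParabolic X := hmem_iff.mp hr
      have htgen : t ∈ cs.simple '' X :=
        generator_of_conj_mem cs X (wr j) (w.getD j default) (hwr j hj1) ht
      refine ⟨htgen, ?_⟩
      have h1 : t * wr j = wr j * cs.simple (w.getD j default) := by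
        rw [htdef]; group
      have hc : ((v j * t)⁻¹ * v (j + 1)) * wr (j + 1) = wr j := by
        calc ((v j * t)⁻¹ * v (j + 1)) * wr (j + 1)
            = t⁻¹ * (((v j)⁻¹ * v (j + 1)) * wr (j + 1)) := by group
          _ = t⁻¹ * (t * wr j) := by rw [hueq, ← h1]
          _ = wr j := by group
      set c := (v j * t)⁻¹ * v (j + 1) with hcdef
      have hcmem : c ∈ cs.standardParabolic X :=
        mul_mem (inv_mem (mul_mem (hv j hj1) ht)) (hv (j + 1) hj2)
      have l1 : cs.length (wr j) = cs.length c + cs.length (wr (j + 1)) := by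
        rw [← hc]
        exact hwr (j + 1) hj2 c hcmem
      have hcinv : c⁻¹ * wr j = wr (j + 1) := by rw [← hc]; group
      have l2 : cs.length (wr (j + 1)) = cs.length c + cs.length (wr j) := by
        rw [← hcinv, hwr j hj1 c⁻¹ (inv_mem hcmem), cs.length_inv]
      have hc0 : cs.length c = 0 := by omega
      have hc1 : c = 1 := (cs.length_eq_zero_iff).mp hc0
      rw [hcdef] at hc1
      calc v (j + 1) = (v j * t) * ((v j * t)⁻¹ * v (j + 1)) := by group
        _ = (v j * t) * 1 := by rw [hc1]
        _ = v j * t := mul_one _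
    · intro hr
      have ht : t ∉ cs.standardParabolic X := fun h => hr (hmem_iff.mpr h)
      have h1 := eq_one_of_conj_not_mem cs X (wr j) (wr (j + 1)) ((v j)⁻¹ * v (j + 1))
        (w.getD j default) (hwr j hj1) (hwr (j + 1) hj2)
        (mul_mem (inv_mem (hv j hj1)) (hv (j + 1) hj2)) hueq ht
      calc v (j + 1) = v j * ((v j)⁻¹ * v (j + 1)) := by group
        _ = v j * 1 := by rw [h1]
        _ = v j := mul_one _
  have hv0 : v 0 = 1 := by
    have h0 := hdecomp 0 (Nat.zero_le _)
    rw [List.take_zero, cs.wordProd_nil] at h0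
    have h1 := hwr 0 (Nat.zero_le _) (v 0) (hv 0 (Nat.zero_le _))
    rw [← h0, cs.length_one] at h1
    exact (cs.length_eq_zero_iff).mp (by omega)
  have main : ∀ j, j ≤ w.length → v j =
      (((List.range j).filter
          (fun m => decide ((cs.leftInvSeq w).getD m 1 ∈ cs.standardParabolic X))).map
        (fun m => wr m * cs.simple (w.getD m default) * (wr m)⁻¹)).prod := by
    intro j
    induction j with
    | zero => intro _; simpa using hv0
    | succ j ih =>
      intro hj
      have hjlt : j < w.length := hj
      have ihv := ih (le_of_lt hjlt)
      rw [List.range_succ, List.filter_append]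
      by_cases hr : (cs.leftInvSeq w).getD j 1 ∈ cs.standardParabolic X
      · rw [show List.filter
            (fun m => decide ((cs.leftInvSeq w).getD m 1 ∈ cs.standardParabolic X)) [j] = [j]
            from by rw [List.filter_cons, if_pos (decide_eq_true hr), List.filter_nil]]
        rw [List.map_append, List.prod_append, ← ihv]
        simp only [List.map_cons, List.map_nil, List.prod_cons, List.prod_nil, mul_one]
        exact ((key j hjlt).1 hr).2
      · rw [show List.filter
            (fun m => decide ((cs.leftInvSeq w).getD m 1 ∈ cs.standardParabolic X)) [j] = []
            from by rw [List.filter_cons,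
              if_neg (by simp only [decide_eq_true_eq]; exact hr), List.filter_nil]]
        rw [List.append_nil, ← ihv]
        exact (key j hjlt).2 hr
  constructor
  · intro m hm
    have hm1 := List.mem_filter.mp hm
    have hmr : m < w.length := List.mem_range.mp hm1.1
    have hPm : (cs.leftInvSeq w).getD m 1 ∈ cs.standardParabolic X := by
      simpa using hm1.2
    exact ((key m hmr).1 hPm).1
  · intro j hj
    rw [ParabolicPrefixAux.filter_lt_range _ hj]
    exact main j hj
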